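/- arXiv:1809.04745 — 5 statements merged into one kernel-verified Lean document; each statement's English description precedes it below -/
import Mathlib

section
/- Let s be a j-pattern sequence and let d(s) denote the number of distinct values taken by s. For any positive integer K, the number of index sequences i : {0,…,j−1} → {0,…,K−1} with i(0)=0 that have the same equality pattern as s, i.e., i(a)=i(b) if and only if s(a)=s(b) for all a,b ∈ {0,…,j−1}, equals n(s) = (K−1)(K−2)⋯(K−(d(s)−1)) = ∏_{t=1}^{d(s)−1} (K−t). -/
/-- A `j`-pattern sequence: `s 0 = 1` and each subsequent value is either `ℓ + 1`
(a fresh label) or equal to an earlier value. -/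
def IsPatternSeq (j : ℕ) (s : Fin j → ℕ) : Prop :=
  (∀ h0 : 0 < j, s ⟨0, h0⟩ = 1) ∧
  ∀ ℓ : Fin j, 1 ≤ ℓ.val → (s ℓ = ℓ.val + 1 ∨ ∃ q : Fin j, q < ℓ ∧ s ℓ = s q)

/-- Lemma 3: the number of index sequences `i : Fin j → Fin K` with `i 0 = 0` having
the same equality pattern as a `j`-pattern sequence `s` equals
`n(s) = (K-1)(K-2)⋯(K-(d(s)-1))`, where `d(s)` is the number of distinct values of `s`. -/
theorem pattern_equivalence_class_size (j K : ℕ) (hj : 0 < j) (hK : 0 < K)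
    (s : Fin j → ℕ) (hs : IsPatternSeq j s) :
    Nat.card {i : Fin j → Fin K //
        i ⟨0, hj⟩ = ⟨0, hK⟩ ∧ ∀ a b : Fin j, i a = i b ↔ s a = s b}
      = ∏ t ∈ Finset.Icc 1 ((Finset.univ.image s).card - 1), (K - t) := by
  classical
  set z : Fin j := ⟨0, hj⟩ with hz
  set z' : Fin K := ⟨0, hK⟩ with hz'
  set c := s z with hc
  set D := Finset.univ.image s with hD
  have hcD : c ∈ D := Finset.mem_image_of_mem s (Finset.mem_univ _)
  have hpick : ∀ v : {x // x ∈ D.erase c}, ∃ a : Fin j, s a = v.val := by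
    intro v
    obtain ⟨a, -, ha⟩ := Finset.mem_image.mp (Finset.mem_of_mem_erase v.2)
    exact ⟨a, ha⟩
  let pk : {x // x ∈ D.erase c} → Fin j := fun v => (hpick v).choose
  have hpk : ∀ v, s (pk v) = v.val := fun v => (hpick v).choose_spec
  let e : {i : Fin j → Fin K //
        i z = z' ∧ ∀ a b : Fin j, i a = i b ↔ s a = s b}
      ≃ ({x // x ∈ D.erase c} ↪ {k : Fin K // k ≠ z'}) :=
  { toFun := fun ip =>
      ⟨fun v => ⟨ip.1 (pk v), by
          intro h
          have h1 : s (pk v) = s z := (ip.2.2 _ _).mp (by rw [h, ip.2.1])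
          exact Finset.ne_of_mem_erase v.2 ((hpk v).symm.trans (h1.trans hc.symm))⟩,
       by
          intro v w h
          have h2 : ip.1 (pk v) = ip.1 (pk w) := congrArg Subtype.val h
          have h3 : s (pk v) = s (pk w) := (ip.2.2 _ _).mp h2
          exact Subtype.ext ((hpk v).symm.trans (h3.trans (hpk w)))⟩,
    invFun := fun f =>
      ⟨fun a => if h : s a = c then z'
        else (f ⟨s a, Finset.mem_erase.mpr ⟨h, Finset.mem_image_of_mem s (Finset.mem_univ _)⟩⟩).val,
       by
        constructor
        · simp [hc]
        · intro a b
          by_cases ha : s a = c <;> by_cases hb : s b = c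
          · simp [ha, hb]
          · simp only [dif_pos ha, dif_neg hb]
            constructor
            · intro h
              exact absurd h.symm (f ⟨s b, _⟩).2
            · intro h; exact absurd (h.symm.trans ha) hb
          · simp only [dif_pos hb, dif_neg ha]
            constructor
            · intro h
              exact absurd h (f ⟨s a, _⟩).2
            · intro h; exact absurd (h.trans hb) ha
          · simp only [dif_neg ha, dif_neg hb]
            constructor
            · intro h
              have := f.injective (Subtype.ext h)
              exact congrArg Subtype.val this
            · intro h
              have : (⟨s a, Finset.mem_erase.mpr ⟨ha, Finset.mem_image_of_mem s (Finset.mem_univ _)⟩⟩ :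
                  {x // x ∈ D.erase c}) = ⟨s b, Finset.mem_erase.mpr ⟨hb, Finset.mem_image_of_mem s (Finset.mem_univ _)⟩⟩ :=
                Subtype.ext h
              rw [this]⟩,
    left_inv := by
      intro ip
      apply Subtype.ext
      funext a
      by_cases ha : s a = c
      · simp only [dif_pos ha]
        have : ip.1 a = ip.1 z := (ip.2.2 a z).mpr (ha.trans hc)
        rw [this, ip.2.1]
      · have hm : s a ∈ D.erase c :=
          Finset.mem_erase.mpr ⟨ha, Finset.mem_image_of_mem s (Finset.mem_univ _)⟩
        simp only [dif_neg ha, Function.Embedding.coeFn_mk]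
        exact (ip.2.2 (pk ⟨s a, hm⟩) a).mpr (hpk ⟨s a, hm⟩)
    right_inv := by
      intro f
      ext v
      have hv : s (pk v) = v.val := hpk v
      have hne : s (pk v) ≠ c := by
        rw [hv]; exact Finset.ne_of_mem_erase v.2
      have hm : s (pk v) ∈ D.erase c :=
        Finset.mem_erase.mpr ⟨hne, Finset.mem_image_of_mem s (Finset.mem_univ _)⟩
      have harg : (⟨s (pk v), hm⟩ : {x // x ∈ D.erase c}) = v := Subtype.ext hv
      show (((if h : s (pk v) = c then z' else _ : Fin K)) : ℕ) = _
      rw [dif_neg hne]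
      exact congrArg (fun w => (((f w : {k : Fin K // k ≠ z'}) : Fin K) : ℕ)) harg }
  rw [Nat.card_congr e]
  rw [Nat.card_eq_fintype_card, Fintype.card_embedding_eq]
  have h1 : Fintype.card {x // x ∈ D.erase c} = D.card - 1 := by
    rw [Fintype.card_coe, Finset.card_erase_of_mem hcD]
  have h2 : Fintype.card {k : Fin K // k ≠ z'} = K - 1 := by
    simp [Fintype.card_subtype_compl]
  rw [h1, h2, Nat.descFactorial_eq_prod_range]
  rw [show Finset.Icc 1 (D.card - 1) = Finset.Ico 1 (D.card - 1 + 1) from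
    (Finset.Ico_add_one_right_eq_Icc _ _).symm, Finset.prod_Ico_eq_prod_range]
  apply Finset.prod_congr (by simp)
  intro i _
  omega
end

section
/- (Lemma P: probability that the parity bits of a sub-block are non-discriminating.) Fix positive integers K and n with K ≥ n, fragment lengths m : {0,…,n−1} → ℕ, and a j-pattern sequence s (of length j ≤ n) whose values are read as message indices in {1,…,K}. For a message tuple W drawn uniformly at random, and for q ∈ {1,…,j−1}, define the event A_{q,s} = { W : for every ℓ < q with s(ℓ) ≠ s(q), W_{s(q)}(ℓ) = W_{s(ℓ)}(ℓ) }. Then Pr(A_{q,s}) = 2^(−Σ m(ℓ)), where the sum runs over ℓ ∈ {0,…,q−1} with s(ℓ) ≠ s(q). -/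
/-- A message tuple: `K` messages, each consisting of `n` fragments, the `ℓ`-th
fragment being a row vector in `F₂^{m ℓ}`. -/
abbrev MsgTuple (K n : ℕ) (m : Fin n → ℕ) : Type :=
  Fin K → (ℓ : Fin n) → Fin (m ℓ) → ZMod 2

lemma patternSeq_pos {j : ℕ} (hj : 0 < j) {s : Fin j → ℕ} (hs : IsPatternSeq j s) :
    ∀ ℓ : Fin j, 1 ≤ s ℓ := by
  have key : ∀ N, ∀ ℓ : Fin j, ℓ.val ≤ N → 1 ≤ s ℓ := by
    intro N
    induction N with
    | zero =>
      intro ℓ hℓ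
      have hℓ0 : ℓ = ⟨0, hj⟩ := Fin.ext (Nat.le_zero.mp hℓ)
      rw [hℓ0, hs.1 hj]
    | succ N ih =>
      intro ℓ hℓ
      rcases Nat.lt_or_ge ℓ.val 1 with h0 | h1
      · have hv : ℓ.val = 0 := by omega
        have hℓ0 : ℓ = ⟨0, hj⟩ := Fin.ext hv
        rw [hℓ0, hs.1 hj]
      · rcases hs.2 ℓ h1 with h | ⟨p, hp, hsp⟩
        · omega
        · have hp' : p.val < ℓ.val := hp
          rw [hsp]; exact ih p (by omega)
  exact fun ℓ => key j ℓ ℓ.isLt.le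

lemma zmod2_add_eq_zero_iff (a b : ZMod 2) : a + b = 0 ↔ a = b := by
  constructor
  · intro h
    have := neg_eq_of_add_eq_zero_left h
    rw [CharTwo.neg_eq] at this
    exact this.symm
  · intro h; rw [h, CharTwo.add_self_eq_zero]

/-- Auxiliary involution used in the proof of `nondiscriminating_parity_probability`. -/
def parityPhi (K n j : ℕ) (hjn : j ≤ n) (m : Fin n → ℕ) (s : Fin j → ℕ)
    (hsK : ∀ ℓ : Fin j, s ℓ - 1 < K) (q : Fin j)
    (W : MsgTuple K n m) : MsgTuple K n m :=
  fun i ℓn =>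
    if h : ℓn.val < q.val then
      if i.val = s q - 1 ∧ s ⟨ℓn.val, h.trans q.isLt⟩ ≠ s q then
        W i ℓn + W ⟨s ⟨ℓn.val, h.trans q.isLt⟩ - 1, hsK _⟩ ℓn
      else W i ℓn
    else W i ℓn

lemma parityPhi_invol (K n j : ℕ) (hjn : j ≤ n) (m : Fin n → ℕ) (s : Fin j → ℕ)
    (hsK : ∀ ℓ : Fin j, s ℓ - 1 < K) (q : Fin j)
    (hpos : ∀ ℓ : Fin j, 1 ≤ s ℓ) :
    Function.Involutive (parityPhi K n j hjn m s hsK q) := by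
  intro W
  funext i ℓn
  unfold parityPhi
  by_cases h : ℓn.val < q.val
  · simp only [dif_pos h]
    by_cases h2 : i.val = s q - 1 ∧ s (⟨ℓn.val, h.trans q.isLt⟩ : Fin j) ≠ s q
    · simp only [if_pos h2]
      have ht : ¬ ((⟨s (⟨ℓn.val, h.trans q.isLt⟩ : Fin j) - 1,
            hsK _⟩ : Fin K).val = s q - 1 ∧ s (⟨ℓn.val, h.trans q.isLt⟩ : Fin j) ≠ s q) := by
        intro hcontra
        have ha : s (⟨ℓn.val, h.trans q.isLt⟩ : Fin j) - 1 = s q - 1 := hcontra.1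
        have h1 := hpos (⟨ℓn.val, h.trans q.isLt⟩ : Fin j)
        have h2 := hpos q
        exact hcontra.2 (by omega)
      rw [if_neg ht]
      ext b
      simp [add_assoc, CharTwo.add_self_eq_zero]
    · simp only [if_neg h2]
  · simp only [dif_neg h]

lemma funZMod2_add_eq_zero_iff {α : Type*} (f g : α → ZMod 2) : f + g = 0 ↔ f = g := by
  constructor
  · intro h
    funext x
    have hx : f x + g x = 0 := congrFun h x
    exact (zmod2_add_eq_zero_iff _ _).mp hx
  · intro h
    funext x
    have : f x + g x = 0 := (zmod2_add_eq_zero_iff _ _).mpr (congrFun h x)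
    exact this

lemma parityPhi_eval (K n j : ℕ) (hjn : j ≤ n) (m : Fin n → ℕ) (s : Fin j → ℕ)
    (hsK : ∀ ℓ : Fin j, s ℓ - 1 < K) (q : Fin j) (W : MsgTuple K n m)
    (ℓ : Fin j) (hlt : ℓ < q) (hne : s ℓ ≠ s q) (i : Fin K) (hi : i.val = s q - 1) :
    parityPhi K n j hjn m s hsK q W i (Fin.castLE hjn ℓ)
      = W i (Fin.castLE hjn ℓ) + W ⟨s ℓ - 1, hsK ℓ⟩ (Fin.castLE hjn ℓ) := by
  unfold parityPhi
  have h : (Fin.castLE hjn ℓ).val < q.val := hlt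
  rw [dif_pos h]
  have heq : (⟨(Fin.castLE hjn ℓ).val, h.trans q.isLt⟩ : Fin j) = ℓ := Fin.ext rfl
  simp only [heq]
  rw [if_pos ⟨hi, hne⟩]


/-- Lemma P: for a uniformly random message tuple, the probability that the parity
bits of sub-block `q` are non-discriminating for the `j`-pattern sequence `s`, i.e.
that `W_{s(q)}(ℓ) = W_{s(ℓ)}(ℓ)` for every `ℓ < q` with `s ℓ ≠ s q`, equals
`2 ^ (-Σ_{ℓ<q, s ℓ ≠ s q} m ℓ)`. -/
theorem nondiscriminating_parity_probability (K n j : ℕ)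
    (hj : 0 < j) (hjn : j ≤ n) (hnK : n ≤ K)
    (m : Fin n → ℕ) (s : Fin j → ℕ) (hs : IsPatternSeq j s)
    (hsK : ∀ ℓ : Fin j, s ℓ - 1 < K)
    (q : Fin j) (hq : 1 ≤ q.val) :
    (Nat.card {W : MsgTuple K n m //
        ∀ ℓ : Fin j, ℓ < q → s ℓ ≠ s q →
          W ⟨s q - 1, hsK q⟩ (Fin.castLE hjn ℓ)
            = W ⟨s ℓ - 1, hsK ℓ⟩ (Fin.castLE hjn ℓ)} : ℚ)
        / (Nat.card (MsgTuple K n m) : ℚ)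
      = (2 : ℚ) ^ (-((∑ ℓ ∈ Finset.univ.filter (fun ℓ : Fin j => ℓ < q ∧ s ℓ ≠ s q),
              m (Fin.castLE hjn ℓ) : ℕ) : ℤ)) := by
  classical
  have hpos := patternSeq_pos hj hs
  set i0 : Fin K := ⟨s q - 1, hsK q⟩ with hi0def
  set F : Finset (Fin j) := Finset.univ.filter (fun ℓ : Fin j => ℓ < q ∧ s ℓ ≠ s q) with hF
  set S : Finset (Fin n) := F.image (Fin.castLE hjn) with hSdef
  let Φ : Equiv.Perm (MsgTuple K n m) :=
    (parityPhi_invol K n j hjn m s hsK q hpos).toPerm _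
  -- Step 1 : transport to the "zero" event
  have step1 : Nat.card {W : MsgTuple K n m //
        ∀ ℓ : Fin j, ℓ < q → s ℓ ≠ s q →
          W i0 (Fin.castLE hjn ℓ)
            = W ⟨s ℓ - 1, hsK ℓ⟩ (Fin.castLE hjn ℓ)}
      = Nat.card {W : MsgTuple K n m //
          ∀ (i : Fin K) (ℓn : Fin n), (i = i0 ∧ ℓn ∈ S) → W i ℓn = 0} := by
    apply Nat.card_congr
    apply Equiv.subtypeEquiv Φ
    intro W
    constructor
    · intro hP i ℓn hc
      obtain ⟨hi, hmem⟩ := hc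
      rcases Finset.mem_image.mp hmem with ⟨ℓ, hℓF, hcast⟩
      obtain ⟨-, hlt, hne⟩ := Finset.mem_filter.mp hℓF
      subst hcast
      subst hi
      have hval : (i0 : Fin K).val = s q - 1 := rfl
      have := parityPhi_eval K n j hjn m s hsK q W ℓ hlt hne i0 hval
      show parityPhi K n j hjn m s hsK q W i0 (Fin.castLE hjn ℓ) = 0
      rw [this, funZMod2_add_eq_zero_iff]
      exact hP ℓ hlt hne
    · intro hP ℓ hlt hne
      have hmem : Fin.castLE hjn ℓ ∈ S :=
        Finset.mem_image_of_mem _ (Finset.mem_filter.mpr ⟨Finset.mem_univ _, hlt, hne⟩)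
      have h0 : Φ W i0 (Fin.castLE hjn ℓ) = 0 := hP i0 (Fin.castLE hjn ℓ) ⟨rfl, hmem⟩
      have heval : parityPhi K n j hjn m s hsK q W i0 (Fin.castLE hjn ℓ)
          = W i0 (Fin.castLE hjn ℓ) + W ⟨s ℓ - 1, hsK ℓ⟩ (Fin.castLE hjn ℓ) :=
        parityPhi_eval K n j hjn m s hsK q W ℓ hlt hne i0 rfl
      have h0' : parityPhi K n j hjn m s hsK q W i0 (Fin.castLE hjn ℓ) = 0 := h0
      rw [heval, funZMod2_add_eq_zero_iff] at h0'
      exact h0'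
  -- Step 2 : count the zero event
  have step2 : Nat.card {W : MsgTuple K n m //
          ∀ (i : Fin K) (ℓn : Fin n), (i = i0 ∧ ℓn ∈ S) → W i ℓn = 0}
      = ∏ i : Fin K, ∏ ℓn : Fin n, (if i = i0 ∧ ℓn ∈ S then 1 else 2 ^ (m ℓn)) := by
    have e : {W : MsgTuple K n m //
          ∀ (i : Fin K) (ℓn : Fin n), (i = i0 ∧ ℓn ∈ S) → W i ℓn = 0}
        ≃ ∀ i : Fin K, ∀ ℓn : Fin n, {v : Fin (m ℓn) → ZMod 2 // (i = i0 ∧ ℓn ∈ S) → v = 0} :=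
      (@Equiv.subtypePiEquivPi (Fin K) (fun _ => (ℓn : Fin n) → Fin (m ℓn) → ZMod 2)
          (fun i f => ∀ ℓn : Fin n, (i = i0 ∧ ℓn ∈ S) → f ℓn = 0)).trans
        (Equiv.piCongrRight fun i =>
          @Equiv.subtypePiEquivPi (Fin n) _ (fun ℓn v => (i = i0 ∧ ℓn ∈ S) → v = 0))
    rw [Nat.card_congr e, Nat.card_pi]
    refine Finset.prod_congr rfl fun i _ => ?_
    rw [Nat.card_pi]
    refine Finset.prod_congr rfl fun ℓn _ => ?_
    by_cases hcond : i = i0 ∧ ℓn ∈ S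
    · rw [if_pos hcond,
        Nat.card_congr (Equiv.subtypeEquivRight (fun v => ⟨fun h => h hcond, fun h _ => h⟩))]
      simp [Nat.card_eq_fintype_card]
    · rw [if_neg hcond,
        Nat.card_congr (Equiv.subtypeUnivEquiv (fun v h => absurd h hcond))]
      simp [Nat.card_eq_fintype_card, ZMod.card]
  -- Step 3 : count the whole space
  have step3 : Nat.card (MsgTuple K n m) = ∏ _i : Fin K, ∏ ℓn : Fin n, 2 ^ (m ℓn) := by
    rw [Nat.card_pi]
    refine Finset.prod_congr rfl fun i _ => ?_
    rw [Nat.card_pi]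
    refine Finset.prod_congr rfl fun ℓn _ => ?_
    simp [Nat.card_eq_fintype_card, ZMod.card]
  rw [step1, step2, step3]
  -- Step 4 : arithmetic
  have hsum : ∑ ℓ ∈ F, m (Fin.castLE hjn ℓ) = ∑ ℓn ∈ S, m ℓn := by
    rw [hSdef, Finset.sum_image (fun a _ b _ hab => Fin.castLE_injective hjn hab)]
  push_cast
  rw [← Finset.prod_div_distrib]
  have hinner : ∀ i : Fin K,
      (∏ ℓn : Fin n, (if i = i0 ∧ ℓn ∈ S then (1 : ℚ) else 2 ^ (m ℓn)))
        / (∏ ℓn : Fin n, (2 : ℚ) ^ (m ℓn))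
      = if i = i0 then ((2 : ℚ) ^ (∑ ℓn ∈ S, m ℓn))⁻¹ else 1 := by
    intro i
    by_cases hi : i = i0
    · rw [if_pos hi, ← Finset.prod_div_distrib]
      have : ∀ ℓn : Fin n,
          (if i = i0 ∧ ℓn ∈ S then (1 : ℚ) else 2 ^ (m ℓn)) / (2 : ℚ) ^ (m ℓn)
          = if ℓn ∈ S then ((2 : ℚ) ^ (m ℓn))⁻¹ else 1 := by
        intro ℓn
        by_cases hmem : ℓn ∈ S
        · rw [if_pos ⟨hi, hmem⟩, if_pos hmem, one_div]
        · rw [if_neg (fun hc => hmem hc.2), if_neg hmem,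
            div_self (pow_ne_zero _ (by norm_num))]
      rw [Finset.prod_congr rfl (fun ℓn _ => this ℓn), Finset.prod_ite_mem,
        Finset.univ_inter, Finset.prod_inv_distrib, Finset.prod_pow_eq_pow_sum]
    · rw [if_neg hi]
      have : ∀ ℓn : Fin n,
          (if i = i0 ∧ ℓn ∈ S then (1 : ℚ) else 2 ^ (m ℓn)) = (2 : ℚ) ^ (m ℓn) := by
        intro ℓn
        rw [if_neg (fun hc => hi hc.1)]
      rw [Finset.prod_congr rfl (fun ℓn _ => this ℓn),
        div_self (Finset.prod_ne_zero_iff.mpr (fun ℓn _ => pow_ne_zero _ (by norm_num)))]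
  rw [Finset.prod_congr rfl (fun i _ => hinner i), Finset.prod_ite_eq',
    if_pos (Finset.mem_univ i0)]
  have hcast : (∑ x ∈ F, ((m (Fin.castLE hjn x) : ℤ))) = ((∑ ℓn ∈ S, m ℓn : ℕ) : ℤ) := by
    rw [← hsum]; push_cast; rfl
  rw [hcast, zpow_neg, zpow_natCast]
end

section
/- (Lemma P1: conditional probability of non-discriminating parity bits.) In the uniform message model, fix a j-pattern sequence s (values read as message indices in {1,…,K}, K ≥ n ≥ j), the events A_{q,s} as in Lemma P, an index q ∈ {1,…,j−1}, and a nonempty set Q ⊆ {1,…,q−1} such that s(k) = s(q) for every k ∈ Q; let p = max Q. Then (a) ⋂_{k∈Q} A_{k,s} = A_{p,s} and A_{q,s} ⊆ A_{p,s}; and (b) Pr( A_{q,s} | ⋂_{k∈Q} A_{k,s} ) = 2^(−( Σ_{ℓ∈{0,…,q−1}, s(ℓ)≠s(q)} m(ℓ) − Σ_{k∈{0,…,p−1}, s(k)≠s(p)} m(k) )). -/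
/-- The event `A_{q,s}` that the parity bits of sub-block `q` are non-discriminating
for the pattern sequence `s`: every fragment of message `s q` preceding slot `q` that
belongs to a different level matches the corresponding fragment on the path. -/
def nonDiscEvent (K n j : ℕ) (hjn : j ≤ n) (m : Fin n → ℕ) (s : Fin j → ℕ)
    (hsK : ∀ ℓ : Fin j, s ℓ - 1 < K) (q : Fin j) : Set (MsgTuple K n m) :=
  {W | ∀ ℓ : Fin j, ℓ < q → s ℓ ≠ s q →
      W ⟨s q - 1, hsK q⟩ (Fin.castLE hjn ℓ) = W ⟨s ℓ - 1, hsK ℓ⟩ (Fin.castLE hjn ℓ)}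

lemma pattern_one_le {j : ℕ} {s : Fin j → ℕ} (hs : IsPatternSeq j s) :
    ∀ ℓ : Fin j, 1 ≤ s ℓ := by
  have H : ∀ N : ℕ, ∀ ℓ : Fin j, ℓ.val ≤ N → 1 ≤ s ℓ := by
    intro N
    induction N with
    | zero =>
      intro ℓ hℓ
      have h0 : (⟨0, ℓ.pos⟩ : Fin j) = ℓ := Fin.ext (by simp [Nat.le_zero.mp hℓ])
      have h1 := hs.1 ℓ.pos
      rw [h0] at h1; omega
    | succ N ih =>
      intro ℓ hℓ
      rcases Nat.eq_zero_or_pos ℓ.val with h0 | h1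
      · have h0' : (⟨0, ℓ.pos⟩ : Fin j) = ℓ := Fin.ext (by simp [h0])
        have h1 := hs.1 ℓ.pos
        rw [h0'] at h1; omega
      · rcases hs.2 ℓ h1 with h | ⟨q', hq', h⟩
        · omega
        · rw [h]
          exact ih q' (by have := Fin.lt_def.mp hq'; omega)
  exact fun ℓ => H ℓ.val ℓ le_rfl

lemma nonDisc_mono {K n j : ℕ} (hjn : j ≤ n) (m : Fin n → ℕ) (s : Fin j → ℕ)
    (hsK : ∀ ℓ : Fin j, s ℓ - 1 < K) {a b : Fin j} (hab : a ≤ b) (hsab : s a = s b) :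
    nonDiscEvent K n j hjn m s hsK b ⊆ nonDiscEvent K n j hjn m s hsK a := by
  intro W hW ℓ hℓ hne
  have hrow : (⟨s a - 1, hsK a⟩ : Fin K) = ⟨s b - 1, hsK b⟩ := Fin.ext (by simp [hsab])
  rw [hrow]
  exact hW ℓ (lt_of_lt_of_le hℓ hab) (by rw [← hsab]; exact hne)

/-- Replace the entries of row `r` in the columns coming from `ext` by the
corresponding entries on the path. -/
def tweakFwd (K n j : ℕ) (m : Fin n → ℕ) (s : Fin j → ℕ)
    (hsK : ∀ ℓ : Fin j, s ℓ - 1 < K) (r : Fin K) (ext : Finset (Fin j))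
    (W : MsgTuple K n m) : MsgTuple K n m :=
  fun i ℓ' => if h : ℓ'.val < j then
    (if i = r ∧ (⟨ℓ'.val, h⟩ : Fin j) ∈ ext then W ⟨s ⟨ℓ'.val, h⟩ - 1, hsK _⟩ ℓ' else W i ℓ')
  else W i ℓ'

/-- Replace the entries of row `r` in the columns coming from `ext` by given data `g`. -/
def tweakBwd (K n j : ℕ) (hjn : j ≤ n) (m : Fin n → ℕ) (r : Fin K) (ext : Finset (Fin j))
    (V : MsgTuple K n m) (g : (ℓ : ext) → Fin (m (Fin.castLE hjn ℓ.1)) → ZMod 2) :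
    MsgTuple K n m :=
  fun i ℓ' => if h : ℓ'.val < j then
    (if hm : i = r ∧ (⟨ℓ'.val, h⟩ : Fin j) ∈ ext then g ⟨⟨ℓ'.val, h⟩, hm.2⟩ else V i ℓ')
  else V i ℓ'

lemma tweakFwd_castLE (K n j : ℕ) (hjn : j ≤ n) (m : Fin n → ℕ) (s : Fin j → ℕ)
    (hsK : ∀ ℓ : Fin j, s ℓ - 1 < K) (r : Fin K) (ext : Finset (Fin j))
    (W : MsgTuple K n m) (i : Fin K) (ℓ : Fin j) :
    tweakFwd K n j m s hsK r ext W i (Fin.castLE hjn ℓ) =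
      if i = r ∧ ℓ ∈ ext then W ⟨s ℓ - 1, hsK ℓ⟩ (Fin.castLE hjn ℓ)
      else W i (Fin.castLE hjn ℓ) := by
  simp only [tweakFwd]
  rw [dif_pos (show (Fin.castLE hjn ℓ).val < j from ℓ.isLt)]
  simp only [Fin.coe_castLE, Fin.eta]

lemma tweakBwd_castLE (K n j : ℕ) (hjn : j ≤ n) (m : Fin n → ℕ) (r : Fin K)
    (ext : Finset (Fin j)) (V : MsgTuple K n m)
    (g : (ℓ : ext) → Fin (m (Fin.castLE hjn ℓ.1)) → ZMod 2) (i : Fin K) (ℓ : Fin j) :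
    tweakBwd K n j hjn m r ext V g i (Fin.castLE hjn ℓ) =
      if hm : i = r ∧ ℓ ∈ ext then g ⟨ℓ, hm.2⟩
      else V i (Fin.castLE hjn ℓ) := by
  simp only [tweakBwd]
  rw [dif_pos (show (Fin.castLE hjn ℓ).val < j from ℓ.isLt)]
  simp only [Fin.coe_castLE, Fin.eta]

/-- Lemma P1: for a nonempty `Q ⊆ {1,…,q-1}` with `s k = s q` for all `k ∈ Q` and
`p = max Q`, one has `⋂_{k∈Q} A_{k,s} = A_{p,s}`, `A_{q,s} ⊆ A_{p,s}`, and the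
conditional probability `Pr(A_{q,s} | ⋂_{k∈Q} A_{k,s})` equals
`2^(-(Σ_{ℓ<q, s ℓ≠s q} m ℓ - Σ_{k<p, s k≠s p} m k))`. -/
theorem conditional_nondiscriminating_probability (K n j : ℕ)
    (hj : 0 < j) (hjn : j ≤ n) (hnK : n ≤ K)
    (m : Fin n → ℕ) (s : Fin j → ℕ) (hs : IsPatternSeq j s)
    (hsK : ∀ ℓ : Fin j, s ℓ - 1 < K)
    (q : Fin j) (hq : 1 ≤ q.val)
    (Q : Finset (Fin j)) (hQne : Q.Nonempty)
    (hQ : ∀ k ∈ Q, k < q ∧ 1 ≤ k.val ∧ s k = s q) :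
    (⋂ k ∈ Q, nonDiscEvent K n j hjn m s hsK k)
        = nonDiscEvent K n j hjn m s hsK (Q.max' hQne) ∧
    nonDiscEvent K n j hjn m s hsK q ⊆ nonDiscEvent K n j hjn m s hsK (Q.max' hQne) ∧
    (Nat.card {W : MsgTuple K n m //
          W ∈ nonDiscEvent K n j hjn m s hsK q ∩ ⋂ k ∈ Q, nonDiscEvent K n j hjn m s hsK k} : ℚ)
        / (Nat.card {W : MsgTuple K n m //
          W ∈ ⋂ k ∈ Q, nonDiscEvent K n j hjn m s hsK k} : ℚ)
      = (2 : ℚ) ^ (-(((∑ ℓ ∈ Finset.univ.filter (fun ℓ : Fin j => ℓ < q ∧ s ℓ ≠ s q),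
              m (Fin.castLE hjn ℓ) : ℕ) : ℤ)
          - ((∑ k ∈ Finset.univ.filter
                (fun k : Fin j => k < Q.max' hQne ∧ s k ≠ s (Q.max' hQne)),
              m (Fin.castLE hjn k) : ℕ) : ℤ))) := by
  classical
  set p := Q.max' hQne with hpdef
  obtain ⟨hpq, hp1, hsp⟩ := hQ p (Q.max'_mem hQne)
  have hpos := pattern_one_le hs
  set A := nonDiscEvent K n j hjn m s hsK with hA
  -- part (a)
  have hInter : (⋂ k ∈ Q, A k) = A p := by
    apply Set.Subset.antisymm
    · exact Set.biInter_subset_of_mem (Q.max'_mem hQne)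
    · refine Set.subset_iInter₂ fun k hk => ?_
      obtain ⟨hkq, hk1, hsk⟩ := hQ k hk
      exact nonDisc_mono hjn m s hsK (Q.le_max' k hk) (by rw [hsk, hsp])
  have hsub : A q ⊆ A p := nonDisc_mono hjn m s hsK hpq.le hsp
  -- the index sets
  set F : Finset (Fin j) := Finset.univ.filter (fun ℓ : Fin j => ℓ < q ∧ s ℓ ≠ s q) with hF
  set Fp : Finset (Fin j) := Finset.univ.filter (fun k : Fin j => k < p ∧ s k ≠ s p) with hFpdef
  set ext : Finset (Fin j) := F \ Fp with hext
  have hFpF : Fp ⊆ F := by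
    intro ℓ hℓ
    rw [hFpdef, Finset.mem_filter] at hℓ
    rw [hF, Finset.mem_filter]
    exact ⟨Finset.mem_univ _, hℓ.2.1.trans hpq, by rw [← hsp]; exact hℓ.2.2⟩
  have hextF : ∀ ℓ ∈ ext, ℓ < q ∧ s ℓ ≠ s q := by
    intro ℓ hℓ
    have h1 := (Finset.mem_sdiff.mp hℓ).1
    rw [hF, Finset.mem_filter] at h1
    exact h1.2
  have hrowne : ∀ ℓ : Fin j, s ℓ ≠ s q →
      (⟨s ℓ - 1, hsK ℓ⟩ : Fin K) ≠ ⟨s q - 1, hsK q⟩ := by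
    intro ℓ hne heq
    have h1 := hpos ℓ; have h2 := hpos q
    have h3 : s ℓ - 1 = s q - 1 := congrArg Fin.val heq
    exact hne (by omega)
  have hrp : (⟨s p - 1, hsK p⟩ : Fin K) = ⟨s q - 1, hsK q⟩ := Fin.ext (by simp [hsp])
  -- membership of the forward map
  have memq : ∀ W : MsgTuple K n m, W ∈ A p →
      tweakFwd K n j m s hsK ⟨s q - 1, hsK q⟩ ext W ∈ A q := by
    intro W hW ℓ hℓq hℓne
    have hcneg : ¬((⟨s ℓ - 1, hsK ℓ⟩ : Fin K) = ⟨s q - 1, hsK q⟩ ∧ ℓ ∈ ext) :=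
      fun hcon => hrowne ℓ hℓne hcon.1
    rw [tweakFwd_castLE K n j hjn, tweakFwd_castLE K n j hjn, if_neg hcneg]
    by_cases hm : ℓ ∈ ext
    · rw [if_pos ⟨rfl, hm⟩]
    · rw [if_neg (fun hcon => hm hcon.2)]
      have hFmem : ℓ ∈ F := by
        rw [hF, Finset.mem_filter]; exact ⟨Finset.mem_univ _, hℓq, hℓne⟩
      have hFpmem : ℓ ∈ Fp := by
        by_contra hnot
        exact hm (Finset.mem_sdiff.mpr ⟨hFmem, hnot⟩)
      rw [hFpdef, Finset.mem_filter] at hFpmem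
      have := hW ℓ hFpmem.2.1 hFpmem.2.2
      rw [← hrp]
      exact this
  -- membership of the backward map
  have memp : ∀ V : MsgTuple K n m, V ∈ A q →
      ∀ g : (ℓ : ext) → Fin (m (Fin.castLE hjn ℓ.1)) → ZMod 2,
      tweakBwd K n j hjn m ⟨s q - 1, hsK q⟩ ext V g ∈ A p := by
    intro V hV g ℓ hℓp hℓnep
    have hFpmem : ℓ ∈ Fp := by
      rw [hFpdef, Finset.mem_filter]; exact ⟨Finset.mem_univ _, hℓp, hℓnep⟩
    have hnotext : ℓ ∉ ext := fun hx => (Finset.mem_sdiff.mp hx).2 hFpmem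
    rw [tweakBwd_castLE, tweakBwd_castLE, dif_neg (fun hc => hnotext hc.2),
      dif_neg (fun hc => hnotext hc.2)]
    have h1 : ℓ < q := hℓp.trans hpq
    have h2 : s ℓ ≠ s q := by rw [← hsp]; exact hℓnep
    have := hV ℓ h1 h2
    rw [hrp]
    exact this
  -- the key cardinality relation
  have hcard : Nat.card {W : MsgTuple K n m // W ∈ A p}
      = Nat.card {V : MsgTuple K n m // V ∈ A q}
        * 2 ^ (∑ ℓ ∈ ext, m (Fin.castLE hjn ℓ)) := by
    have e : {W : MsgTuple K n m // W ∈ A p} ≃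
        ({V : MsgTuple K n m // V ∈ A q} ×
          ((ℓ : ext) → Fin (m (Fin.castLE hjn ℓ.1)) → ZMod 2)) :=
      { toFun := fun W => ⟨⟨tweakFwd K n j m s hsK ⟨s q - 1, hsK q⟩ ext W.1,
            memq W.1 W.2⟩, fun ℓ => W.1 ⟨s q - 1, hsK q⟩ (Fin.castLE hjn ℓ.1)⟩
        invFun := fun Vg => ⟨tweakBwd K n j hjn m ⟨s q - 1, hsK q⟩ ext Vg.1.1 Vg.2,
            memp Vg.1.1 Vg.1.2 Vg.2⟩
        left_inv := by
          rintro ⟨W, hW⟩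
          apply Subtype.ext
          dsimp only
          funext i ℓ'
          by_cases h : ℓ'.val < j
          · have hc : Fin.castLE hjn (⟨ℓ'.val, h⟩ : Fin j) = ℓ' := rfl
            rw [← hc]
            by_cases hm : i = (⟨s q - 1, hsK q⟩ : Fin K) ∧ (⟨ℓ'.val, h⟩ : Fin j) ∈ ext
            · obtain ⟨hi, hmem⟩ := hm
              subst hi
              rw [tweakBwd_castLE, dif_pos ⟨rfl, hmem⟩]
            · rw [tweakBwd_castLE, dif_neg hm, tweakFwd_castLE K n j hjn, if_neg hm]
          · simp only [tweakFwd, tweakBwd, dif_neg h]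
        right_inv := by
          rintro ⟨⟨V, hV⟩, g⟩
          refine Prod.ext (Subtype.ext ?_) ?_
          · dsimp only
            funext i ℓ'
            by_cases h : ℓ'.val < j
            · have hc : Fin.castLE hjn (⟨ℓ'.val, h⟩ : Fin j) = ℓ' := rfl
              rw [← hc]
              by_cases hm : i = (⟨s q - 1, hsK q⟩ : Fin K) ∧ (⟨ℓ'.val, h⟩ : Fin j) ∈ ext
              · obtain ⟨hi, hmem⟩ := hm
                subst hi
                have hc2 : ¬((⟨s (⟨ℓ'.val, h⟩ : Fin j) - 1, hsK _⟩ : Fin K) = ⟨s q - 1, hsK q⟩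
                    ∧ (⟨ℓ'.val, h⟩ : Fin j) ∈ ext) :=
                  fun hc2 => hrowne _ (hextF _ hmem).2 hc2.1
                rw [tweakFwd_castLE K n j hjn, if_pos ⟨rfl, hmem⟩, tweakBwd_castLE,
                  dif_neg hc2]
                exact (hV _ (hextF _ hmem).1 (hextF _ hmem).2).symm
              · rw [tweakFwd_castLE K n j hjn, if_neg hm, tweakBwd_castLE, dif_neg hm]
            · simp only [tweakFwd, tweakBwd, dif_neg h]
          · funext ℓ
            dsimp only
            rw [tweakBwd_castLE, dif_pos ⟨rfl, ℓ.2⟩] }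
    rw [Nat.card_congr e, Nat.card_prod]
    congr 1
    calc Nat.card ((ℓ : ext) → Fin (m (Fin.castLE hjn ℓ.1)) → ZMod 2)
        = ∏ ℓ : ext, 2 ^ m (Fin.castLE hjn ℓ.1) := by
          simp [Nat.card_eq_fintype_card, Fintype.card_pi, Fintype.card_fun]
      _ = ∏ ℓ ∈ ext, 2 ^ m (Fin.castLE hjn ℓ) := Finset.prod_coe_sort ext (fun ℓ => 2 ^ m (Fin.castLE hjn ℓ))
      _ = 2 ^ ∑ ℓ ∈ ext, m (Fin.castLE hjn ℓ) := by
          rw [Finset.prod_pow_eq_pow_sum]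
  -- nonemptiness
  have hzero : (fun _ _ _ => 0 : MsgTuple K n m) ∈ A q := fun ℓ _ _ => rfl
  have hApos : 0 < Nat.card {V : MsgTuple K n m // V ∈ A q} := by
    have : Nonempty {V : MsgTuple K n m // V ∈ A q} := ⟨⟨_, hzero⟩⟩
    exact Nat.card_pos
  -- conclusion
  refine ⟨hInter, hsub, ?_⟩
  rw [hInter, Set.inter_eq_self_of_subset_left hsub, hcard]
  have hEq : (∑ ℓ ∈ F, m (Fin.castLE hjn ℓ))
      = (∑ ℓ ∈ Fp, m (Fin.castLE hjn ℓ)) + ∑ ℓ ∈ ext, m (Fin.castLE hjn ℓ) := by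
    rw [hext, ← Finset.sum_sdiff hFpF, Nat.add_comm]
  have hEZ : -(((∑ ℓ ∈ F, m (Fin.castLE hjn ℓ) : ℕ) : ℤ)
      - ((∑ ℓ ∈ Fp, m (Fin.castLE hjn ℓ) : ℕ) : ℤ))
      = -((∑ ℓ ∈ ext, m (Fin.castLE hjn ℓ) : ℕ) : ℤ) := by
    rw [hEq]; push_cast; ring
  rw [hEZ]
  have ha : ((Nat.card {V : MsgTuple K n m // V ∈ A q} : ℚ)) ≠ 0 := by
    exact_mod_cast hApos.ne'
  rw [Nat.cast_mul, Nat.cast_pow, div_mul_eq_div_div, div_self ha, one_div,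
    zpow_neg, zpow_natCast]
  norm_num
end

section
/- (Survival probability of a fixed candidate path over the random generator matrices.) Fix positive integers K and n, fragment information lengths m : {0,…,n−1} → ℕ, parity lengths l : {1,…,n−1} → ℕ, a fixed (deterministic) message tuple w : {1,…,K} → ∏_{ℓ=0}^{n−1} F₂^{m(ℓ)}, and a fixed index sequence i : {0,…,n−1} → {1,…,K}. Call stage q ∈ {1,…,n−1} discriminating if the concatenated row vector ( w_{i(0)}(0)+w_{i(q)}(0), …, w_{i(q−1)}(q−1)+w_{i(q)}(q−1) ) over F₂ is nonzero. If the generator blocks G_{ℓ,q−1} ∈ F₂^{m(ℓ)×l(q)} (for 0 ≤ ℓ ≤ q−1, 1 ≤ q ≤ n−1) are drawn independently and uniformly at random, then the probability that the parity equations Σ_{ℓ=0}^{q−1} ( w_{i(ℓ)}(ℓ) + w_{i(q)}(ℓ) )·G_{ℓ,q−1} = 0 hold simultaneously for all q = 1,…,n−1 equals ∏_{q discriminating} 2^(−l(q)). -/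
/-- A tuple of generator blocks `G_{ℓ,q-1} ∈ F₂^{m ℓ × l q}`, one for each pair
`0 ≤ ℓ < q ≤ n-1`. -/
abbrev GenTuple (n : ℕ) (m l : Fin n → ℕ) : Type :=
  (q : Fin n) → (ℓ : Fin n) → ℓ.val < q.val → Matrix (Fin (m ℓ)) (Fin (l q)) (ZMod 2)

/-- The parity-check sum for one stage. -/
def stageSum {ι : Type} [Fintype ι] (P : ι → Prop) [DecidablePred P]
    {d : ι → ℕ} {c : ℕ} (v : (x : ι) → Fin (d x) → ZMod 2)
    (g : (x : ι) → P x → Matrix (Fin (d x)) (Fin c) (ZMod 2)) : Fin c → ZMod 2 :=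
  ∑ x : ι, if h : P x then Matrix.vecMul (v x) (g x h) else 0

lemma stageSum_add {ι : Type} [Fintype ι] (P : ι → Prop) [DecidablePred P]
    {d : ι → ℕ} {c : ℕ} (v : (x : ι) → Fin (d x) → ZMod 2)
    (a b : (x : ι) → P x → Matrix (Fin (d x)) (Fin c) (ZMod 2)) :
    stageSum P v (fun x h => a x h + b x h) = stageSum P v a + stageSum P v b := by
  unfold stageSum
  rw [← Finset.sum_add_distrib]
  exact Finset.sum_congr rfl fun x _ => by
    by_cases h : P x <;> simp [h, Matrix.vecMul_add]

lemma stageSum_sub {ι : Type} [Fintype ι] (P : ι → Prop) [DecidablePred P]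
    {d : ι → ℕ} {c : ℕ} (v : (x : ι) → Fin (d x) → ZMod 2)
    (a b : (x : ι) → P x → Matrix (Fin (d x)) (Fin c) (ZMod 2)) :
    stageSum P v (fun x h => a x h - b x h) = stageSum P v a - stageSum P v b := by
  unfold stageSum
  rw [← Finset.sum_sub_distrib]
  exact Finset.sum_congr rfl fun x _ => by
    by_cases h : P x <;> simp [h, Matrix.vecMul_sub]

lemma stageSum_zero {ι : Type} [Fintype ι] (P : ι → Prop) [DecidablePred P]
    {d : ι → ℕ} {c : ℕ} (v : (x : ι) → Fin (d x) → ZMod 2) :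
    stageSum P v (fun (x : ι) (_ : P x) => (0 : Matrix (Fin (d x)) (Fin c) (ZMod 2))) = 0 := by
  unfold stageSum
  exact Finset.sum_eq_zero fun x _ => by
    by_cases h : P x <;> simp [h]

/-- The explicit additive section used to show the parity-check map is surjective. -/
def stageSec {ι : Type} [DecidableEq ι] {d : ι → ℕ} {c : ℕ} (P : ι → Prop)
    (ℓ0 : ι) (t0 : Fin (d ℓ0)) (y : Fin c → ZMod 2) :
    (x : ι) → P x → Matrix (Fin (d x)) (Fin c) (ZMod 2) :=
  fun x _ => Matrix.of fun t j => if x = ℓ0 ∧ (t : ℕ) = (t0 : ℕ) then y j else 0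

lemma stageSum_stageSec {ι : Type} [Fintype ι] [DecidableEq ι] (P : ι → Prop) [DecidablePred P]
    {d : ι → ℕ} {c : ℕ} (v : (x : ι) → Fin (d x) → ZMod 2)
    (ℓ0 : ι) (hP0 : P ℓ0) (t0 : Fin (d ℓ0)) (hv0 : v ℓ0 t0 ≠ 0) (y : Fin c → ZMod 2) :
    stageSum P v (stageSec P ℓ0 t0 y) = y := by
  have hone : v ℓ0 t0 = 1 := by
    have : ∀ a : ZMod 2, a ≠ 0 → a = 1 := by decide
    exact this _ hv0
  funext j
  unfold stageSum stageSec
  rw [Finset.sum_apply]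
  rw [Finset.sum_eq_single ℓ0]
  · simp only [dite_apply, dif_pos hP0]
    have hM : (Matrix.of fun t j => if True ∧ (t : ℕ) = (t0 : ℕ) then y j else 0 :
        Matrix (Fin (d ℓ0)) (Fin c) (ZMod 2)) =
        Matrix.of fun t j => if t = t0 then y j else 0 := by
      ext t j
      simp [Fin.ext_iff]
    rw [hM]
    simp only [Matrix.vecMul, dotProduct, Matrix.of_apply, mul_ite, mul_zero]
    rw [Finset.sum_ite_eq' Finset.univ t0]
    simp [hone]
  · intro x _ hx
    by_cases h : P x <;>
      simp [h, hx, Matrix.vecMul, dotProduct, Matrix.of_apply, dite_apply]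
  · intro h; exact absurd (Finset.mem_univ ℓ0) h

/-- Counting: if some `v ℓ0 t0 ≠ 0` with `P ℓ0`, the parity-check map is surjective with an
additive section, so the solution set has cardinality `card / 2^c`. -/
lemma stage_count {ι : Type} [Fintype ι] [DecidableEq ι] (P : ι → Prop) [DecidablePred P]
    (d : ι → ℕ) (c : ℕ) (v : (x : ι) → Fin (d x) → ZMod 2)
    (ℓ0 : ι) (hP0 : P ℓ0) (t0 : Fin (d ℓ0)) (hv0 : v ℓ0 t0 ≠ 0) :
    Nat.card ((x : ι) → P x → Matrix (Fin (d x)) (Fin c) (ZMod 2)) =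
      Nat.card {g : (x : ι) → P x → Matrix (Fin (d x)) (Fin c) (ZMod 2) //
        stageSum P v g = 0} * 2 ^ c := by
  classical
  have hsf := stageSum_stageSec (c := c) P v ℓ0 hP0 t0 hv0
  let e : ((x : ι) → P x → Matrix (Fin (d x)) (Fin c) (ZMod 2)) ≃
      {g : (x : ι) → P x → Matrix (Fin (d x)) (Fin c) (ZMod 2) // stageSum P v g = 0}
        × (Fin c → ZMod 2) :=
  { toFun := fun g =>
      (⟨fun x h => g x h - stageSec P ℓ0 t0 (stageSum P v g) x h, by
        rw [stageSum_sub, hsf, sub_self]⟩, stageSum P v g)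
    invFun := fun p => fun x h => p.1.1 x h + stageSec P ℓ0 t0 p.2 x h
    left_inv := fun g => by
      funext x h
      simp only
      exact sub_add_cancel _ _
    right_inv := fun p => by
      obtain ⟨⟨k, hk⟩, y⟩ := p
      have hy : stageSum P v (fun x h => k x h + stageSec P ℓ0 t0 y x h) = y := by
        rw [stageSum_add, hk, hsf, zero_add]
      refine Prod.ext (Subtype.ext ?_) hy
      funext x h
      simp only [hy]
      exact add_sub_cancel_right _ _ }
  rw [Nat.card_congr e, Nat.card_prod]
  congr 1
  simp [Nat.card_pi, Nat.card_zmod]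

/-- Survival probability of a fixed candidate path over the random generator matrices:
with all generator blocks independent and uniform, the probability that the parity
equations `Σ_{ℓ<q} (w_{i(ℓ)}(ℓ) + w_{i(q)}(ℓ))·G_{ℓ,q-1} = 0` hold for every stage
`q = 1,…,n-1` equals the product of `2^(-l q)` over the discriminating stages `q`,
i.e. those for which some fragment `ℓ < q` satisfies `w_{i(ℓ)}(ℓ) ≠ w_{i(q)}(ℓ)`. -/
theorem candidate_path_survival_probability (K n : ℕ) (hK : 0 < K) (hn : 0 < n)
    (m l : Fin n → ℕ)
    (w : Fin K → (ℓ : Fin n) → Fin (m ℓ) → ZMod 2)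
    (i : Fin n → Fin K) :
    (Nat.card {G : GenTuple n m l //
        ∀ q : Fin n, 1 ≤ q.val →
          (∑ ℓ : Fin n, if h : ℓ.val < q.val
              then Matrix.vecMul (fun t => w (i ℓ) ℓ t + w (i q) ℓ t) (G q ℓ h)
              else 0) = 0} : ℚ)
        / (Nat.card (GenTuple n m l) : ℚ)
      = ∏ q ∈ Finset.univ.filter (fun q : Fin n =>
            1 ≤ q.val ∧ ∃ ℓ : Fin n, ℓ.val < q.val ∧ w (i ℓ) ℓ ≠ w (i q) ℓ),
          (2 : ℚ) ^ (-(l q : ℤ)) := by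
  classical
  have e1 : Nat.card {G : GenTuple n m l //
        ∀ q : Fin n, 1 ≤ q.val →
          (∑ ℓ : Fin n, if h : ℓ.val < q.val
              then Matrix.vecMul (fun t => w (i ℓ) ℓ t + w (i q) ℓ t) (G q ℓ h)
              else 0) = 0}
      = Nat.card ((q : Fin n) →
          {g : (ℓ : Fin n) → ℓ.val < q.val → Matrix (Fin (m ℓ)) (Fin (l q)) (ZMod 2) //
            1 ≤ q.val →
              (∑ ℓ : Fin n, if h : ℓ.val < q.val
                  then Matrix.vecMul (fun t => w (i ℓ) ℓ t + w (i q) ℓ t) (g ℓ h)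
                  else 0) = 0}) :=
    Nat.card_congr (Equiv.subtypePiEquivPi
      (p := fun (q : Fin n)
          (g : (ℓ : Fin n) → ℓ.val < q.val → Matrix (Fin (m ℓ)) (Fin (l q)) (ZMod 2)) =>
        1 ≤ q.val →
          (∑ ℓ : Fin n, if h : ℓ.val < q.val
              then Matrix.vecMul (fun t => w (i ℓ) ℓ t + w (i q) ℓ t) (g ℓ h)
              else 0) = 0))
  rw [e1, Finset.prod_filter, Nat.card_pi, Nat.card_pi]
  push_cast
  rw [← Finset.prod_div_distrib]
  refine Finset.prod_congr rfl fun q _ => ?_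
  by_cases hd : 1 ≤ q.val ∧ ∃ ℓ : Fin n, ℓ.val < q.val ∧ w (i ℓ) ℓ ≠ w (i q) ℓ
  · rw [if_pos hd]
    obtain ⟨hq1, ℓ0, hℓ0, hwne⟩ := hd
    obtain ⟨t0, ht0⟩ := Function.ne_iff.mp hwne
    set v : (ℓ : Fin n) → Fin (m ℓ) → ZMod 2 :=
      fun ℓ t => w (i ℓ) ℓ t + w (i q) ℓ t with hv
    have hv0 : v ℓ0 t0 ≠ 0 := by
      have h2 : ∀ a b : ZMod 2, a ≠ b → a + b ≠ 0 := by decide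
      exact h2 _ _ ht0
    have h0 : Nat.card
          {g : (ℓ : Fin n) → ℓ.val < q.val → Matrix (Fin (m ℓ)) (Fin (l q)) (ZMod 2) //
            1 ≤ q.val →
              (∑ ℓ : Fin n, if h : ℓ.val < q.val
                  then Matrix.vecMul (fun t => w (i ℓ) ℓ t + w (i q) ℓ t) (g ℓ h)
                  else 0) = 0}
        = Nat.card
          {g : (ℓ : Fin n) → ℓ.val < q.val → Matrix (Fin (m ℓ)) (Fin (l q)) (ZMod 2) //
            stageSum (fun ℓ : Fin n => ℓ.val < q.val) v g = 0} :=
      Nat.card_congr (Equiv.subtypeEquivRight fun g => ⟨fun h => h hq1, fun h _ => h⟩)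
    have hT := stage_count (fun ℓ : Fin n => ℓ.val < q.val) m (l q) v ℓ0 hℓ0 t0 hv0
    rw [h0, hT]
    have hSpos : 0 < Nat.card
        {g : (ℓ : Fin n) → ℓ.val < q.val → Matrix (Fin (m ℓ)) (Fin (l q)) (ZMod 2) //
          stageSum (fun ℓ : Fin n => ℓ.val < q.val) v g = 0} := by
      have : Nonempty
          {g : (ℓ : Fin n) → ℓ.val < q.val → Matrix (Fin (m ℓ)) (Fin (l q)) (ZMod 2) //
            stageSum (fun ℓ : Fin n => ℓ.val < q.val) v g = 0} :=
        ⟨⟨fun _ _ => 0, stageSum_zero _ v⟩⟩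
      exact Nat.card_pos
    have hSne : ((Nat.card
        {g : (ℓ : Fin n) → ℓ.val < q.val → Matrix (Fin (m ℓ)) (Fin (l q)) (ZMod 2) //
          stageSum (fun ℓ : Fin n => ℓ.val < q.val) v g = 0} : ℚ)) ≠ 0 := by
      exact_mod_cast hSpos.ne'
    push_cast
    rw [div_mul_cancel_left₀ hSne, zpow_neg, zpow_natCast]
  · rw [if_neg hd]
    have hall : ∀ g : (ℓ : Fin n) → ℓ.val < q.val → Matrix (Fin (m ℓ)) (Fin (l q)) (ZMod 2),
        1 ≤ q.val →
          (∑ ℓ : Fin n, if h : ℓ.val < q.val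
              then Matrix.vecMul (fun t => w (i ℓ) ℓ t + w (i q) ℓ t) (g ℓ h)
              else 0) = 0 := by
      intro g hq
      rw [not_and_or] at hd
      rcases hd with h1 | h2
      · exact absurd hq h1
      push_neg at h2
      refine Finset.sum_eq_zero fun ℓ _ => ?_
      by_cases h : ℓ.val < q.val
      · have hw := h2 ℓ h
        have hz : (fun t => w (i ℓ) ℓ t + w (i q) ℓ t) = 0 := by
          funext t
          rw [hw]
          exact CharTwo.add_self_eq_zero _
        rw [dif_pos h, hz, Matrix.zero_vecMul]
      · rw [dif_neg h]
    have hcc : Nat.card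
          {g : (ℓ : Fin n) → ℓ.val < q.val → Matrix (Fin (m ℓ)) (Fin (l q)) (ZMod 2) //
            1 ≤ q.val →
              (∑ ℓ : Fin n, if h : ℓ.val < q.val
                  then Matrix.vecMul (fun t => w (i ℓ) ℓ t + w (i q) ℓ t) (g ℓ h)
                  else 0) = 0}
        = Nat.card ((ℓ : Fin n) → ℓ.val < q.val → Matrix (Fin (m ℓ)) (Fin (l q)) (ZMod 2)) :=
      Nat.card_congr (Equiv.subtypeUnivEquiv hall)
    rw [hcc, div_self]
    have : Nonempty ((ℓ : Fin n) → ℓ.val < q.val → Matrix (Fin (m ℓ)) (Fin (l q)) (ZMod 2)) :=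
      ⟨fun _ _ => 0⟩
    exact_mod_cast Nat.card_pos.ne'
end

section
/- (Bound on the expected surviving paths for trailing parity allocation, from the proof of Theorem 2.) Let K, J, n, r be positive integers with K ≥ 2, 1 ≤ r ≤ n−1, K < 2^J, and set P = r·J. Define parity lengths l(ℓ) = 0 for 1 ≤ ℓ < n − r and l(ℓ) = J for n − r ≤ ℓ ≤ n−1, and p(ℓ) = 2^(−l(ℓ)). Then Σ_{q=1}^{n−1} K^(n−1−q)·(K−1)·∏_{ℓ=q}^{n−1} p(ℓ) ≤ K^(n−1)/2^P + K/(2^J − K). -/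
/-- Bound on the expected number of surviving erroneous paths for the trailing parity
allocation: with `P = r·J` parity bits all placed in the last `r` sub-blocks
(`l ℓ = 0` for `ℓ < n - r`, `l ℓ = J` otherwise) and `p ℓ = 2^(-l ℓ)`,
`Σ_{q=1}^{n-1} K^(n-1-q)·(K-1)·∏_{ℓ=q}^{n-1} p ℓ ≤ K^(n-1)/2^P + K/(2^J - K)`. -/
theorem trailing_parity_surviving_paths_bound (K J n r : ℕ)
    (hK : 2 ≤ K) (hJ : 0 < J) (hr1 : 1 ≤ r) (hrn : r ≤ n - 1) (hKJ : K < 2 ^ J)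
    (l : ℕ → ℕ) (hl : ∀ ℓ, l ℓ = if ℓ < n - r then 0 else J)
    (p : ℕ → ℝ) (hp : ∀ ℓ, p ℓ = (2 : ℝ) ^ (-(l ℓ : ℤ))) :
    ∑ q ∈ Finset.Icc 1 (n - 1),
        (K : ℝ) ^ (n - 1 - q) * ((K : ℝ) - 1) * ∏ ℓ ∈ Finset.Icc q (n - 1), p ℓ
      ≤ (K : ℝ) ^ (n - 1) / 2 ^ (r * J) + (K : ℝ) / ((2 : ℝ) ^ J - K) := by
  have hn2 : 2 ≤ n := by omega
  set m := n - 1 with hm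
  set s := n - r with hs
  have hs1 : 1 ≤ s := by omega
  have hsm : s ≤ m := by omega
  have hmsr : m + 1 - s = r := by omega
  have h2Jpos : (0:ℝ) < 2 ^ J := by positivity
  have hKR : (2:ℝ) ≤ (K:ℝ) := by exact_mod_cast hK
  have hK1 : (0:ℝ) ≤ (K:ℝ) - 1 := by linarith
  have hK0 : (0:ℝ) ≤ (K:ℝ) := by linarith
  have hKlt : (K:ℝ) < 2 ^ J := by exact_mod_cast hKJ
  have hDen : (0:ℝ) < 2 ^ J - K := by linarith
  set c : ℝ := ((2:ℝ) ^ J)⁻¹ with hc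
  have hc0 : 0 ≤ c := by positivity
  have hp1 : ∀ ℓ, ℓ < s → p ℓ = 1 := by
    intro ℓ h
    rw [hp ℓ, hl ℓ, if_pos h]
    simp
  have hp2 : ∀ ℓ, s ≤ ℓ → p ℓ = c := by
    intro ℓ h
    rw [hp ℓ, hl ℓ, if_neg (by omega), zpow_neg, zpow_natCast]
  have hprod1 : ∀ q ∈ Finset.Ioc 0 s, ∏ ℓ ∈ Finset.Icc q m, p ℓ = c ^ r := by
    intro q hq
    obtain ⟨hq1, hq2⟩ := Finset.mem_Ioc.mp hq
    rw [← Finset.Ico_add_one_right_eq_Icc, ← Finset.prod_Ico_consecutive _ hq2 (by omega : s ≤ m + 1)]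
    have e1 : ∏ ℓ ∈ Finset.Ico q s, p ℓ = 1 :=
      Finset.prod_eq_one fun ℓ hℓ => hp1 ℓ (Finset.mem_Ico.mp hℓ).2
    have e2 : ∏ ℓ ∈ Finset.Ico s (m+1), p ℓ = c ^ r := by
      rw [Finset.prod_congr rfl fun ℓ hℓ => hp2 ℓ (Finset.mem_Ico.mp hℓ).1,
        Finset.prod_const, Nat.card_Ico, hmsr]
    rw [e1, e2, one_mul]
  have hprod2 : ∀ q ∈ Finset.Ioc s m, ∏ ℓ ∈ Finset.Icc q m, p ℓ = c ^ (m + 1 - q) := by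
    intro q hq
    obtain ⟨hq1, hq2⟩ := Finset.mem_Ioc.mp hq
    rw [Finset.prod_congr rfl fun ℓ hℓ =>
        hp2 ℓ (by have := (Finset.mem_Icc.mp hℓ).1; omega),
      Finset.prod_const, Nat.card_Icc]
  have hsplit : Finset.Icc 1 m = Finset.Ioc 0 m := by
    ext x; simp [Nat.lt_iff_add_one_le]
  rw [hsplit, ← Finset.sum_Ioc_consecutive _ (Nat.zero_le s) hsm]
  have hS1 : ∑ q ∈ Finset.Ioc 0 s,
      (K:ℝ) ^ (m - q) * ((K:ℝ) - 1) * ∏ ℓ ∈ Finset.Icc q m, p ℓ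
      ≤ (K:ℝ) ^ m / 2 ^ (r * J) := by
    have hgeo : ∑ q ∈ Finset.Ioc 0 s, (K:ℝ) ^ (m - q) * ((K:ℝ) - 1) ≤ (K:ℝ) ^ m := by
      have hsub : ∑ q ∈ Finset.Ioc 0 s, (K:ℝ) ^ (m - q) * ((K:ℝ) - 1)
          ≤ ∑ q ∈ Finset.Ioc 0 m, (K:ℝ) ^ (m - q) * ((K:ℝ) - 1) :=
        Finset.sum_le_sum_of_subset_of_nonneg (Finset.Ioc_subset_Ioc_right hsm)
          (fun i _ _ => mul_nonneg (pow_nonneg hK0 _) hK1)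
      have heq : ∑ q ∈ Finset.Ioc 0 m, (K:ℝ) ^ (m - q) * ((K:ℝ) - 1) = (K:ℝ) ^ m - 1 := by
        rw [show Finset.Ioc 0 m = Finset.Ico 1 (m+1) by ext x; simp [Nat.lt_succ_iff]; omega,
          Finset.sum_Ico_eq_sum_range]
        have hm1 : m + 1 - 1 = m := by omega
        rw [hm1]
        rw [Finset.sum_congr rfl (fun i hi => by
          rw [show m - (1 + i) = m - 1 - i from by omega])]
        rw [Finset.sum_range_reflect (fun j => (K:ℝ) ^ j * ((K:ℝ) - 1)) m,
          ← Finset.sum_mul, geom_sum_mul]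
      linarith
    calc ∑ q ∈ Finset.Ioc 0 s,
        (K:ℝ) ^ (m - q) * ((K:ℝ) - 1) * ∏ ℓ ∈ Finset.Icc q m, p ℓ
        = ∑ q ∈ Finset.Ioc 0 s, (K:ℝ) ^ (m - q) * ((K:ℝ) - 1) * c ^ r :=
          Finset.sum_congr rfl fun q hq => by rw [hprod1 q hq]
      _ = (∑ q ∈ Finset.Ioc 0 s, (K:ℝ) ^ (m - q) * ((K:ℝ) - 1)) * c ^ r :=
          (Finset.sum_mul _ _ _).symm
      _ ≤ (K:ℝ) ^ m * c ^ r := by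
          apply mul_le_mul_of_nonneg_right hgeo (pow_nonneg hc0 _)
      _ = (K:ℝ) ^ m / 2 ^ (r * J) := by
          rw [hc, inv_pow, ← pow_mul, mul_comm J r, div_eq_mul_inv]
  have hS2 : ∑ q ∈ Finset.Ioc s m,
      (K:ℝ) ^ (m - q) * ((K:ℝ) - 1) * ∏ ℓ ∈ Finset.Icc q m, p ℓ
      ≤ (K:ℝ) / ((2:ℝ) ^ J - K) := by
    set x : ℝ := (K:ℝ) * c with hxdef
    have hx0 : 0 ≤ x := mul_nonneg hK0 hc0
    have hx1 : x < 1 := by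
      rw [hxdef, hc, ← div_eq_mul_inv, div_lt_one h2Jpos]
      exact hKlt
    have hgeom : ∑ j ∈ Finset.range (r-1), x ^ j ≤ 1 / (1 - x) := by
      rw [le_div_iff₀ (by linarith : (0:ℝ) < 1 - x)]
      have hg := geom_sum_mul x (r-1)
      have h2 : (∑ j ∈ Finset.range (r-1), x ^ j) * (1 - x) = 1 - x ^ (r-1) := by
        linear_combination -hg
      have := pow_nonneg hx0 (r-1)
      linarith
    calc ∑ q ∈ Finset.Ioc s m,
        (K:ℝ) ^ (m - q) * ((K:ℝ) - 1) * ∏ ℓ ∈ Finset.Icc q m, p ℓ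
        = ∑ q ∈ Finset.Ioc s m, (K:ℝ) ^ (m - q) * ((K:ℝ) - 1) * c ^ (m + 1 - q) :=
          Finset.sum_congr rfl fun q hq => by rw [hprod2 q hq]
      _ = ∑ j ∈ Finset.range (r-1), (K:ℝ) ^ j * ((K:ℝ) - 1) * c ^ (j + 1) := by
          rw [show Finset.Ioc s m = Finset.Ico (s+1) (m+1) by
              ext y; simp [Nat.lt_succ_iff, Nat.succ_le_iff],
            Finset.sum_Ico_eq_sum_range,
            show m + 1 - (s + 1) = r - 1 from by omega]
          rw [Finset.sum_congr rfl (fun i hi => by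
            have hi' : i < r - 1 := Finset.mem_range.mp hi
            rw [show m - (s + 1 + i) = r - 1 - 1 - i from by omega,
              show m + 1 - (s + 1 + i) = (r - 1 - 1 - i) + 1 from by omega])]
          exact Finset.sum_range_reflect (fun j => (K:ℝ) ^ j * ((K:ℝ) - 1) * c ^ (j + 1)) (r-1)
      _ = ((K:ℝ) - 1) * c * ∑ j ∈ Finset.range (r-1), x ^ j := by
          rw [Finset.mul_sum]
          exact Finset.sum_congr rfl fun j _ => by
            rw [hxdef, mul_pow, pow_succ]; ring
      _ ≤ ((K:ℝ) - 1) * c * (1 / (1 - x)) :=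
          mul_le_mul_of_nonneg_left hgeom (mul_nonneg hK1 hc0)
      _ = ((K:ℝ) - 1) / ((2:ℝ) ^ J - K) := by
          rw [hxdef, hc]
          have h1 : (1 : ℝ) - (K:ℝ) * ((2:ℝ)^J)⁻¹ = ((2:ℝ)^J - K) / 2^J := by
            field_simp
          rw [h1, eq_div_iff hDen.ne']
          field_simp
      _ ≤ (K:ℝ) / ((2:ℝ) ^ J - K) :=
          (div_le_div_iff_of_pos_right hDen).mpr (by linarith)
  calc (∑ q ∈ Finset.Ioc 0 s,
          (K:ℝ) ^ (m - q) * ((K:ℝ) - 1) * ∏ ℓ ∈ Finset.Icc q m, p ℓ)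
        + ∑ q ∈ Finset.Ioc s m,
          (K:ℝ) ^ (m - q) * ((K:ℝ) - 1) * ∏ ℓ ∈ Finset.Icc q m, p ℓ
      ≤ (K:ℝ) ^ m / 2 ^ (r * J) + (K:ℝ) / ((2:ℝ) ^ J - K) := add_le_add hS1 hS2
end
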